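/- The kernel of the linear endomorphism l* of K⟨A⟩ equals the orthogonal complement of the free Lie algebra L_K(A) with respect to the canonical scalar product for which the set of words A* is an orthonormal basis. -/

import Mathlib

open MonoidAlgebra

attribute [local instance 100] LieRing.ofAssociativeRing

/-- The word `w` viewed as a monomial in the free associative algebra `K⟨A⟩`. -/
noncomputable def word (K : Type*) [CommRing K] {A : Type*} (w : List A) :
    MonoidAlgebra K (FreeMonoid A) :=
  MonoidAlgebra.single (FreeMonoid.ofList w) 1

/-- The adjoint `l*` of the left-normed Lie bracketing, defined by the recursion
`l*(ε) = 0`, `l*(a) = a`, `l*(aub) = l*(au)·b − l*(ub)·a`. -/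
noncomputable def lstar (K : Type*) [CommRing K] {A : Type*} :
    List A → MonoidAlgebra K (FreeMonoid A)
  | [] => 0
  | [a] => word K [a]
  | a :: b :: r =>
      lstar K (a :: (b :: r).dropLast) * word K [(b :: r).getLast (by simp)]
        - lstar K (b :: r) * word K [a]
  termination_by w => w.length
  decreasing_by
    · simp [List.length_dropLast]
    · simp

/-- The linear extension of `l*` to the whole of `K⟨A⟩`. -/
noncomputable def lstarExt (K : Type*) [CommRing K] {A : Type*}
    (P : MonoidAlgebra K (FreeMonoid A)) : MonoidAlgebra K (FreeMonoid A) :=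
  P.coeff.sum fun w c => c • lstar K (FreeMonoid.toList w)

/-- The free Lie algebra `L_K(A)`: the Lie subalgebra of `K⟨A⟩` generated by the letters. -/
noncomputable def freeLie (K : Type*) [CommRing K] (A : Type*) :
    LieSubalgebra K (MonoidAlgebra K (FreeMonoid A)) :=
  LieSubalgebra.lieSpan K _ {P | ∃ a : A, P = word K [a]}

/-- The canonical scalar product on `K⟨A⟩` for which the words form an orthonormal basis. -/
noncomputable def scal {K : Type*} [CommRing K] {A : Type*}
    (P Q : MonoidAlgebra K (FreeMonoid A)) : K :=
  P.coeff.sum fun w c => c * Q.coeff w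

open FreeMonoid

/-- The left-normed Lie bracketing `l`. -/
noncomputable def lb (K : Type*) [CommRing K] {A : Type*} :
    List A → MonoidAlgebra K (FreeMonoid A)
  | [] => 0
  | [a] => word K [a]
  | a :: b :: r =>
      lb K (a :: (b :: r).dropLast) * word K [(b :: r).getLast (by simp)]
        - word K [(b :: r).getLast (by simp)] * lb K (a :: (b :: r).dropLast)
  termination_by w => w.length
  decreasing_by
    all_goals simp [List.length_dropLast]

section Helpers

variable {K : Type*} [CommRing K] {A : Type*}

lemma mul_word_concat_eq (f : MonoidAlgebra K (FreeMonoid A)) (b : A) (v : List A) :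
    (f * word K [b]).coeff (ofList (v ++ [b])) = f.coeff (ofList v) := by
  rw [word, MonoidAlgebra.coeff_mul_single_eq_coeff_mul (x := f) (ofList v) ?_, mul_one]
  intro c _
  show toList c ++ [b] = v ++ [b] ↔ c = ofList v
  rw [List.append_left_inj]
  exact Iff.rfl

lemma mul_word_concat_ne (f : MonoidAlgebra K (FreeMonoid A)) {a b : A} (h : b ≠ a) (v : List A) :
    (f * word K [a]).coeff (ofList (v ++ [b])) = 0 := by
  rw [word]
  apply MonoidAlgebra.mul_single_apply_of_not_exists_mul
  rintro ⟨d, hd⟩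
  have : v ++ [b] = toList d ++ [a] := hd
  obtain ⟨-, h2⟩ := List.append_inj' this rfl
  exact h (List.cons.injEq .. ▸ h2 |>.1)

lemma mul_word_nil (f : MonoidAlgebra K (FreeMonoid A)) (a : A) :
    (f * word K [a]).coeff (ofList ([] : List A)) = 0 := by
  rw [word]
  apply MonoidAlgebra.mul_single_apply_of_not_exists_mul
  rintro ⟨d, hd⟩
  have : ([] : List A) = toList d ++ [a] := hd
  simp at this

lemma word_mul_cons_eq (f : MonoidAlgebra K (FreeMonoid A)) (b : A) (v : List A) :
    (word K [b] * f).coeff (ofList (b :: v)) = f.coeff (ofList v) := by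
  rw [word, MonoidAlgebra.coeff_single_mul_eq_mul_coeff (x := f) (ofList v) ?_, one_mul]
  intro c _
  show b :: toList c = b :: v ↔ c = ofList v
  rw [List.cons.injEq]
  simp only [true_and]
  exact Iff.rfl

lemma word_mul_cons_ne (f : MonoidAlgebra K (FreeMonoid A)) {a b : A} (h : b ≠ a) (v : List A) :
    (word K [a] * f).coeff (ofList (b :: v)) = 0 := by
  rw [word]
  apply MonoidAlgebra.single_mul_apply_of_not_exists_mul
  rintro ⟨d, hd⟩
  have : b :: v = a :: toList d := hd
  exact h (List.cons.injEq .. ▸ this |>.1)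

lemma word_mul_nil (f : MonoidAlgebra K (FreeMonoid A)) (a : A) :
    (word K [a] * f).coeff (ofList ([] : List A)) = 0 := by
  rw [word]
  apply MonoidAlgebra.single_mul_apply_of_not_exists_mul
  rintro ⟨d, hd⟩
  have : ([] : List A) = a :: toList d := hd
  simp at this

lemma word_apply_self (v : List A) :
    (word K v).coeff (ofList v) = (1 : K) := by
  rw [word]; exact Finsupp.single_eq_same

lemma word_apply_ne {u v : List A} (h : v ≠ u) :
    (word K v).coeff (ofList u) = (0 : K) := by
  rw [word]
  exact Finsupp.single_eq_of_ne' fun e => h (congrArg FreeMonoid.toList e)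

lemma mul_word_single_eq (f : MonoidAlgebra K (FreeMonoid A)) (b : A) :
    (f * word K [b]).coeff (ofList [b]) = f.coeff (ofList ([] : List A)) :=
  mul_word_concat_eq f b []

lemma mul_word_single_ne (f : MonoidAlgebra K (FreeMonoid A)) {a b : A} (h : b ≠ a) :
    (f * word K [a]).coeff (ofList [b]) = 0 :=
  mul_word_concat_ne f h []

lemma word_mul_single_eq (f : MonoidAlgebra K (FreeMonoid A)) (b : A) :
    (word K [b] * f).coeff (ofList [b]) = f.coeff (ofList ([] : List A)) :=
  word_mul_cons_eq f b []

lemma word_mul_single_ne (f : MonoidAlgebra K (FreeMonoid A)) {a b : A} (h : b ≠ a) :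
    (word K [a] * f).coeff (ofList [b]) = 0 :=
  word_mul_cons_ne f h []

lemma mul_word_cons_concat_eq (f : MonoidAlgebra K (FreeMonoid A)) (b a : A) (s : List A) :
    (f * word K [b]).coeff (ofList (a :: (s ++ [b]))) = f.coeff (ofList (a :: s)) :=
  mul_word_concat_eq f b (a :: s)

lemma mul_word_cons_concat_ne (f : MonoidAlgebra K (FreeMonoid A)) {z b : A} (h : z ≠ b)
    (a : A) (s : List A) :
    (f * word K [b]).coeff (ofList (a :: (s ++ [z]))) = 0 :=
  mul_word_concat_ne f h (a :: s)

private lemma exists_cons (s : List A) (z : A) : ∃ b r, s ++ [z] = b :: r := by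
  cases s with
  | nil => exact ⟨z, [], rfl⟩
  | cons c t => exact ⟨c, t ++ [z], rfl⟩

private lemma exists_concat (c : A) (r : List A) : ∃ s z, c :: r = s ++ [z] := by
  rcases List.eq_nil_or_concat (c :: r) with h | ⟨s, z, h⟩
  · simp at h
  · exact ⟨s, z, by simpa [List.concat_eq_append] using h⟩

private lemma single_ne_append {w : List A} (hw : w ≠ []) (a b : A) :
    ([a] : List A) ≠ w ++ [b] := by
  intro e
  apply hw
  have h' := congrArg List.length e
  rw [List.length_append] at h'
  simpa using h'

lemma lstar_step (a z : A) (s : List A) :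
    lstar K (a :: (s ++ [z])) =
      lstar K (a :: s) * word K [z] - lstar K (s ++ [z]) * word K [a] := by
  obtain ⟨b, r, h⟩ := exists_cons s z
  rw [h, lstar]
  rw [show (b :: r).dropLast = s by rw [← h]; exact List.dropLast_concat ..]
  rw [show (b :: r).getLast (by simp) = z by
    have := List.getLast_concat (l := s) (a := z)
    simp only [h] at this
    exact this]

lemma lb_single (a : A) : lb K [a] = word K [a] := by rw [lb]

lemma lb_step (z : A) {s : List A} (hs : s ≠ []) :
    lb K (s ++ [z]) = lb K s * word K [z] - word K [z] * lb K s := by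
  obtain ⟨a, t, rfl⟩ : ∃ a t, s = a :: t := by
    cases s with
    | nil => exact absurd rfl hs
    | cons a t => exact ⟨a, t, rfl⟩
  show lb K (a :: (t ++ [z])) = _
  obtain ⟨b, r, h⟩ := exists_cons t z
  rw [h, lb]
  rw [show (b :: r).dropLast = t by rw [← h]; exact List.dropLast_concat ..]
  rw [show (b :: r).getLast (by simp) = z by
    have := List.getLast_concat (l := t) (a := z)
    simp only [h] at this
    exact this]

lemma lstar_nil_coeff (u : List A) : (lstar K u).coeff (ofList ([] : List A)) = 0 := by
  match u with
  | [] => rw [lstar]; rfl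
  | [a] =>
      rw [lstar]
      exact word_apply_ne (by simp)
  | a :: c :: r =>
      obtain ⟨s, z, h⟩ := exists_concat c r
      rw [show a :: c :: r = a :: (s ++ [z]) by rw [h], lstar_step]
      rw [MonoidAlgebra.coeff_sub, Finsupp.sub_apply]
      show (_ * word K [z]).coeff (ofList ([] : List A)) - (_ * word K [a]).coeff (ofList ([] : List A)) = 0
      rw [mul_word_nil, mul_word_nil, sub_zero]

lemma key (v : List A) : ∀ u : List A, (lstar K u).coeff (ofList v) = (lb K v).coeff (ofList u) := by
  induction v using List.reverseRecOn with
  | nil =>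
      intro u
      rw [lstar_nil_coeff, lb]
      rfl
  | append_singleton w b ih =>
      intro u
      by_cases hw : w = []
      · subst hw
        show (lstar K u).coeff (ofList [b]) = (lb K [b]).coeff (ofList u)
        rw [lb_single]
        match u with
        | [] =>
            rw [lstar]
            rw [word_apply_ne (v := [b]) (by simp)]
            rfl
        | [a] =>
            rw [lstar]
            by_cases hab : a = b
            · subst hab
              rw [word_apply_self]
            · rw [word_apply_ne (by simp [hab]), word_apply_ne (by simp [Ne.symm hab])]
        | a :: c :: r =>
            obtain ⟨s, z, h⟩ := exists_concat c r
            rw [show a :: c :: r = a :: (s ++ [z]) by rw [h], lstar_step, MonoidAlgebra.coeff_sub, Finsupp.sub_apply]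
            rw [word_apply_ne (u := a :: (s ++ [z])) (by simp)]
            by_cases hbz : b = z
            · subst hbz
              rw [mul_word_single_eq, lstar_nil_coeff]
              by_cases hba : b = a
              · subst hba
                rw [mul_word_single_eq, lstar_nil_coeff, sub_zero]
              · rw [mul_word_single_ne _ hba, sub_zero]
            · rw [mul_word_single_ne _ hbz]
              by_cases hba : b = a
              · subst hba
                rw [mul_word_single_eq, lstar_nil_coeff, sub_zero]
              · rw [mul_word_single_ne _ hba, sub_zero]
      · rw [lb_step _ hw, MonoidAlgebra.coeff_sub, Finsupp.sub_apply]
        match u with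
        | [] =>
            rw [lstar]
            rw [mul_word_nil, word_mul_nil, sub_zero]
            rfl
        | [a] =>
            rw [lstar]
            rw [word_apply_ne (single_ne_append hw a b)]
            by_cases hab : a = b
            · subst hab
              rw [mul_word_single_eq, word_mul_single_eq]
              rw [sub_self]
            · rw [mul_word_single_ne _ hab, word_mul_single_ne _ hab, sub_zero]
        | a :: c :: r =>
            obtain ⟨s, z, h⟩ := exists_concat c r
            rw [show a :: c :: r = a :: (s ++ [z]) by rw [h], lstar_step, MonoidAlgebra.coeff_sub, Finsupp.sub_apply]
            by_cases hzb : z = b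
            · subst hzb
              rw [mul_word_concat_eq (v := w), ih (a :: s),
                mul_word_cons_concat_eq (f := lb K w)]
              by_cases hab : a = z
              · subst hab
                rw [mul_word_concat_eq (v := w), ih (s ++ [a]), word_mul_cons_eq]
              · rw [mul_word_concat_ne _ (fun e => hab e.symm) w,
                  word_mul_cons_ne _ hab, sub_zero]
            · rw [mul_word_concat_ne _ (fun e => hzb e.symm) w,
                mul_word_cons_concat_ne _ hzb, zero_sub, zero_sub]
              by_cases hab : a = b
              · subst hab
                rw [mul_word_concat_eq (v := w), ih (s ++ [z]), word_mul_cons_eq]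
              · rw [mul_word_concat_ne _ (fun e => hab e.symm) w,
                  word_mul_cons_ne _ hab, neg_zero]

end Helpers

section Structural

variable {K : Type*} [CommRing K] {A : Type*}

lemma lstarExt_apply (P : MonoidAlgebra K (FreeMonoid A)) (x : FreeMonoid A) :
    (lstarExt K P).coeff x = scal P (lb K (toList x)) := by
  rw [lstarExt, scal, MonoidAlgebra.coeff_finsuppSum, Finsupp.sum_apply]
  refine Finsupp.sum_congr fun w _ => ?_
  rw [MonoidAlgebra.coeff_smul_apply, smul_eq_mul]
  congr 1
  exact key (toList x) (toList w)

lemma scal_zero_right (P : MonoidAlgebra K (FreeMonoid A)) :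
    scal P (0 : MonoidAlgebra K (FreeMonoid A)) = 0 := by
  simp [scal, Finsupp.sum]

lemma scal_add_right (P Q₁ Q₂ : MonoidAlgebra K (FreeMonoid A)) :
    scal P (Q₁ + Q₂) = scal P Q₁ + scal P Q₂ := by
  simp only [scal, Finsupp.sum]
  rw [← Finset.sum_add_distrib]
  refine Finset.sum_congr rfl fun w _ => ?_
  have : (Q₁ + Q₂).coeff w = Q₁.coeff w + Q₂.coeff w := rfl
  rw [this, mul_add]

lemma scal_smul_right (c : K) (P Q : MonoidAlgebra K (FreeMonoid A)) :
    scal P (c • Q) = c * scal P Q := by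
  simp only [scal, Finsupp.sum, Finset.mul_sum]
  refine Finset.sum_congr rfl fun w _ => ?_
  have : (c • Q).coeff w = c * Q.coeff w := rfl
  rw [this]; ring

lemma lb_mem (v : List A) : lb K v ∈ freeLie K A := by
  induction v using List.reverseRecOn with
  | nil => rw [lb]; exact (freeLie K A).zero_mem
  | append_singleton w b ih =>
      by_cases hw : w = []
      · subst hw
        rw [show ([] : List A) ++ [b] = [b] from rfl, lb_single]
        exact LieSubalgebra.subset_lieSpan ⟨b, rfl⟩
      · rw [lb_step _ hw]
        have hb : word K [b] ∈ freeLie K A := LieSubalgebra.subset_lieSpan ⟨b, rfl⟩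
        have := (freeLie K A).lie_mem ih hb
        rwa [Ring.lie_def] at this

/-- The span of the left-normed bracketings. -/
noncomputable def TT (K : Type*) [CommRing K] (A : Type*) :
    Submodule K (MonoidAlgebra K (FreeMonoid A)) :=
  Submodule.span K (Set.range (lb K (A := A)))

lemma lie_word_mem {x : MonoidAlgebra K (FreeMonoid A)} (hx : x ∈ TT K A) (b : A) :
    ⁅x, word K [b]⁆ ∈ TT K A := by
  induction hx using Submodule.span_induction with
  | mem y hy =>
      obtain ⟨v, rfl⟩ := hy
      by_cases hv : v = []
      · subst hv
        rw [lb]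
        simp only [zero_lie]
        exact (TT K A).zero_mem
      · rw [Ring.lie_def, ← lb_step b hv]
        exact Submodule.subset_span ⟨v ++ [b], rfl⟩
  | zero => simp only [zero_lie]; exact (TT K A).zero_mem
  | add y z hy hz hy' hz' => rw [add_lie]; exact (TT K A).add_mem hy' hz'
  | smul c y hy hy' => rw [smul_lie]; exact (TT K A).smul_mem c hy'

lemma lie_lb_mem (v : List A) :
    ∀ x ∈ TT K A, ⁅x, lb K v⁆ ∈ TT K A := by
  induction v using List.reverseRecOn with
  | nil =>
      intro x hx
      rw [lb]
      simp only [lie_zero]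
      exact (TT K A).zero_mem
  | append_singleton w b ih =>
      intro x hx
      by_cases hw : w = []
      · subst hw
        rw [show ([] : List A) ++ [b] = [b] from rfl, lb_single]
        exact lie_word_mem hx b
      · rw [lb_step _ hw, ← Ring.lie_def, leibniz_lie]
        refine (TT K A).add_mem ?_ ?_
        · exact lie_word_mem (ih x hx) b
        · have h1 : ⁅⁅x, word K [b]⁆, lb K w⁆ ∈ TT K A := ih _ (lie_word_mem hx b)
          have : ⁅lb K w, ⁅x, word K [b]⁆⁆ = -⁅⁅x, word K [b]⁆, lb K w⁆ := (lie_skew _ _).symm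
          rw [this]
          exact (TT K A).neg_mem h1

/-- `TT` as a Lie subalgebra. -/
noncomputable def TTLie (K : Type*) [CommRing K] (A : Type*) :
    LieSubalgebra K (MonoidAlgebra K (FreeMonoid A)) :=
  { TT K A with
    lie_mem' := by
      intro x y hx hy
      induction hy using Submodule.span_induction with
      | mem z hz =>
          obtain ⟨v, rfl⟩ := hz
          exact lie_lb_mem v x hx
      | zero => simp only [lie_zero]; exact (TT K A).zero_mem
      | add y z hy hz hy' hz' => rw [lie_add]; exact (TT K A).add_mem hy' hz'
      | smul c y hy hy' => rw [lie_smul]; exact (TT K A).smul_mem c hy' }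

lemma freeLie_le_TT {Q : MonoidAlgebra K (FreeMonoid A)} (hQ : Q ∈ freeLie K A) :
    Q ∈ TT K A := by
  have : freeLie K A ≤ TTLie K A := by
    rw [freeLie, LieSubalgebra.lieSpan_le]
    rintro P ⟨a, rfl⟩
    show word K [a] ∈ TT K A
    exact Submodule.subset_span ⟨[a], lb_single a⟩
  exact this hQ

end Structural

/-- `ker l* = L_K(A)^⊥`. -/
theorem ker_lstar_eq_orthogonal {K : Type*} [CommRing K] {A : Type*} [Fintype A]
    (P : MonoidAlgebra K (FreeMonoid A)) :
    lstarExt K P = 0 ↔ ∀ Q ∈ freeLie K A, scal P Q = 0 := by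
  constructor
  · intro h Q hQ
    have hv : ∀ v : List A, scal P (lb K v) = 0 := by
      intro v
      have := congrArg (fun f : MonoidAlgebra K (FreeMonoid A) => f.coeff (ofList v)) h
      simpa [lstarExt_apply] using this
    have hQT : Q ∈ TT K A := freeLie_le_TT hQ
    clear hQ
    induction hQT using Submodule.span_induction with
    | mem y hy => obtain ⟨v, rfl⟩ := hy; exact hv v
    | zero => exact scal_zero_right P
    | add y z hy hz hy' hz' => rw [scal_add_right, hy', hz', add_zero]
    | smul c y hy hy' => rw [scal_smul_right, hy', mul_zero]
  · intro h
    ext x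
    rw [lstarExt_apply]
    show scal P (lb K (FreeMonoid.toList x)) = (0 : MonoidAlgebra K (FreeMonoid A)).coeff x
    rw [h _ (lb_mem _)]
    rfl
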